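/- arXiv:2108.08838 — 2 statements merged into one kernel-verified Lean document; each statement's English description precedes it below -/
import Mathlib

section
/- Graded unraveling preserves ALCQI concepts: if I* is the g-unraveling of interpretation I from root r with canonical map f sending each walk to its last element, then for every ALCQI concept C and every element s̄ of I*, s̄ ∈ C^{I*} if and only if f(s̄) ∈ C^I. -/
/-- ALCQI concepts: `atLeast k R inv C` is `≥k R.C` when `inv = false`
and `≥k R⁻.C` when `inv = true`. -/
inductive ALCQI (Cn Rn : Type) : Type
  | top : ALCQI Cn Rn
  | bot : ALCQI Cn Rn
  | atom (A : Cn) : ALCQI Cn Rn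
  | neg (C : ALCQI Cn Rn) : ALCQI Cn Rn
  | inter (C D : ALCQI Cn Rn) : ALCQI Cn Rn
  | atLeast (k : ℕ) (R : Rn) (inv : Bool) (C : ALCQI Cn Rn) : ALCQI Cn Rn

/-- An interpretation with binary roles. -/
structure Interp (Cn Rn : Type) : Type 1 where
  Dom : Type
  cInt : Cn → Set Dom
  rInt : Rn → Set (Dom × Dom)

/-- Edges: a role name (`inl`) or an inverse role name (`inr`), interpreted accordingly. -/
def edgeRel {Cn Rn : Type} (I : Interp Cn Rn) : Rn ⊕ Rn → Set (I.Dom × I.Dom)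
  | .inl R => I.rInt R
  | .inr R => { p | (p.2, p.1) ∈ I.rInt R }

/-- The inverse of an edge label. -/
def invE {Rn : Type} : Rn ⊕ Rn → Rn ⊕ Rn
  | .inl R => .inr R
  | .inr R => .inl R

/-- Semantics of ALCQI; "at least `k` elements" is witnessed by an injection from `Fin k`. -/
def qsem {Cn Rn : Type} (I : Interp Cn Rn) : ALCQI Cn Rn → Set I.Dom
  | .top => Set.univ
  | .bot => ∅
  | .atom A => I.cInt A
  | .neg C => (qsem I C)ᶜ
  | .inter C D => qsem I C ∩ qsem I D
  | .atLeast k R b C =>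
      { u | ∃ f : Fin k → I.Dom, Function.Injective f ∧
          ∀ i, (u, f i) ∈ edgeRel I (if b then .inr R else .inl R) ∧ f i ∈ qsem I C }

/-- `good I u w` : `w` is a valid non-backtracking walk starting at `u`. -/
def good {Cn Rn : Type} (I : Interp Cn Rn) : I.Dom → List ((Rn ⊕ Rn) × I.Dom) → Prop
  | _, [] => True
  | u, (e, v) :: rest =>
      (u, v) ∈ edgeRel I e ∧
      (match rest with
        | [] => True
        | (e', v') :: _ => ¬(e' = invE e ∧ v' = u)) ∧
      good I v rest

/-- The last element of a walk starting at `u`. -/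
def lastOf {Cn Rn : Type} (I : Interp Cn Rn) : I.Dom → List ((Rn ⊕ Rn) × I.Dom) → I.Dom
  | u, [] => u
  | _, (_, v) :: rest => lastOf I v rest

/-- The g-unraveling of `I` from `r`: the domain consists of all finite non-backtracking
walks from `r`; atomic concepts hold at a walk iff they hold at its last element; a role
`R` connects `s̄` to `s̄'` iff `s̄' = s̄ ++ [(R, u)]` or `s̄ = s̄' ++ [(R⁻, u)]` for some `u`. -/
def unravel {Cn Rn : Type} (I : Interp Cn Rn) (r : I.Dom) : Interp Cn Rn where
  Dom := { w : List ((Rn ⊕ Rn) × I.Dom) // good I r w }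
  cInt A := { w | lastOf I r w.1 ∈ I.cInt A }
  rInt R := { p | (∃ u, p.2.1 = p.1.1 ++ [(Sum.inl R, u)]) ∨
                  (∃ u, p.1.1 = p.2.1 ++ [(Sum.inr R, u)]) }

section Aux

variable {Cn Rn : Type} (I : Interp Cn Rn)

lemma invE_invE (e : Rn ⊕ Rn) : invE (invE e) = e := by cases e <;> rfl

lemma edgeRel_invE (e : Rn ⊕ Rn) (a b : I.Dom) :
    (a, b) ∈ edgeRel I (invE e) ↔ (b, a) ∈ edgeRel I e := by
  cases e <;> exact Iff.rfl

lemma lastOf_append_single :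
    ∀ (l : List ((Rn ⊕ Rn) × I.Dom)) (u : I.Dom) (e : Rn ⊕ Rn) (v : I.Dom),
      lastOf I u (l ++ [(e, v)]) = v
  | [], _, _, _ => rfl
  | (_, v0) :: rest, _, e, v => lastOf_append_single rest v0 e v

/-- `okS I u l e v`: appending `(e,v)` at the end of the walk `l` (from `u`)
doesn't backtrack. -/
def okS : I.Dom → List ((Rn ⊕ Rn) × I.Dom) → (Rn ⊕ Rn) → I.Dom → Prop
  | _, [], _, _ => True
  | u, [(e0, _)], e, v => ¬(e = invE e0 ∧ v = u)
  | _, (_, u0) :: p :: rest, e, v => okS u0 (p :: rest) e v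

lemma good_snoc :
    ∀ (l : List ((Rn ⊕ Rn) × I.Dom)) (u : I.Dom) (e : Rn ⊕ Rn) (v : I.Dom),
      good I u (l ++ [(e, v)]) ↔
        good I u l ∧ (lastOf I u l, v) ∈ edgeRel I e ∧ okS I u l e v
  | [], u, e, v => by simp [good, lastOf, okS]
  | [(e0, v0)], u, e, v => by simp [good, lastOf, okS]; tauto
  | (e0, v0) :: (e1, v1) :: rest, u, e, v => by
    have ih' := good_snoc ((e1, v1) :: rest) v0 e v
    constructor
    · rintro ⟨h1, h2, h3⟩
      obtain ⟨g1, g2, g3⟩ := ih'.1 h3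
      exact ⟨⟨h1, h2, g1⟩, g2, g3⟩
    · rintro ⟨⟨h1, h2, g1⟩, g2, g3⟩
      exact ⟨h1, h2, ih'.2 ⟨g1, g2, g3⟩⟩

lemma okS_concat :
    ∀ (l : List ((Rn ⊕ Rn) × I.Dom)) (u : I.Dom) (e0 : Rn ⊕ Rn) (u0 : I.Dom)
      (e : Rn ⊕ Rn) (v : I.Dom),
      okS I u (l ++ [(e0, u0)]) e v ↔ ¬(e = invE e0 ∧ v = lastOf I u l) := by
  intro l
  induction l with
  | nil => intro u e0 u0 e v; simp [okS, lastOf]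
  | cons p l' ih =>
    intro u e0 u0 e v
    obtain ⟨e1, v1⟩ := p
    cases l' with
    | nil => simp [okS, lastOf]
    | cons q l'' =>
      simp only [List.cons_append, okS, lastOf]
      exact ih v1 e0 u0 e v

lemma good_prefix (l : List ((Rn ⊕ Rn) × I.Dom)) (u : I.Dom) (e : Rn ⊕ Rn) (v : I.Dom)
    (h : good I u (l ++ [(e, v)])) : good I u l :=
  ((good_snoc I l u e v).1 h).1

variable (r : I.Dom)

lemma succ_iff (e : Rn ⊕ Rn) (w s : (unravel I r).Dom) :
    (w, s) ∈ edgeRel (unravel I r) e ↔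
      ((∃ u, s.1 = w.1 ++ [(e, u)]) ∨ (∃ u, w.1 = s.1 ++ [(invE e, u)])) := by
  cases e with
  | inl R => exact Iff.rfl
  | inr R =>
    show _ ∈ (unravel I r).rInt R ↔ _
    simp only [unravel, Set.mem_setOf_eq, invE]
    exact Or.comm

lemma succ_last (e : Rn ⊕ Rn) (w s : (unravel I r).Dom)
    (h : (w, s) ∈ edgeRel (unravel I r) e) :
    (lastOf I r w.1, lastOf I r s.1) ∈ edgeRel I e := by
  rcases (succ_iff I r e w s).1 h with ⟨u, hs⟩ | ⟨u, hw⟩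
  · have hg := s.2
    rw [hs] at hg ⊢
    rw [lastOf_append_single]
    exact ((good_snoc I w.1 r e u).1 hg).2.1
  · have hg := w.2
    rw [hw] at hg ⊢
    rw [lastOf_append_single]
    exact (edgeRel_invE I e _ _).1 ((good_snoc I s.1 r (invE e) u).1 hg).2.1

lemma succ_inj (e : Rn ⊕ Rn) (w s s' : (unravel I r).Dom)
    (h : (w, s) ∈ edgeRel (unravel I r) e) (h' : (w, s') ∈ edgeRel (unravel I r) e)
    (hl : lastOf I r s.1 = lastOf I r s'.1) : s = s' := by
  have key : ∀ t t' : (unravel I r).Dom,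
      (∃ u, t.1 = w.1 ++ [(e, u)]) → (∃ u, w.1 = t'.1 ++ [(invE e, u)]) →
      lastOf I r t.1 ≠ lastOf I r t'.1 := by
    rintro t t' ⟨u, ht⟩ ⟨u', ht'⟩
    have hg := t.2
    rw [ht] at hg
    have hok := ((good_snoc I w.1 r e u).1 hg).2.2
    rw [ht'] at hok
    rw [okS_concat, invE_invE] at hok
    rw [ht, lastOf_append_single]
    intro hc
    exact hok ⟨rfl, hc⟩
  rcases (succ_iff I r e w s).1 h with ⟨u, hs⟩ | ⟨u, hw⟩
  · rcases (succ_iff I r e w s').1 h' with ⟨u', hs'⟩ | hpar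
    · rw [hs, lastOf_append_single] at hl
      rw [hs', lastOf_append_single] at hl
      exact Subtype.ext (by rw [hs, hs', hl])
    · exact absurd hl (key s s' ⟨u, hs⟩ hpar)
  · rcases (succ_iff I r e w s').1 h' with hext | ⟨u', hw'⟩
    · exact absurd hl.symm (key s' s hext ⟨u, hw⟩)
    · rw [hw'] at hw
      have := (List.append_inj' hw rfl).1
      exact Subtype.ext this.symm
  
lemma succ_surj (e : Rn ⊕ Rn) (w : (unravel I r).Dom) (v : I.Dom)
    (hv : (lastOf I r w.1, v) ∈ edgeRel I e) :
    ∃ s : (unravel I r).Dom,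
      (w, s) ∈ edgeRel (unravel I r) e ∧ lastOf I r s.1 = v := by
  by_cases h : ∃ l u0, w.1 = l ++ [(invE e, u0)] ∧ lastOf I r l = v
  · obtain ⟨l, u0, hw, hl⟩ := h
    have hg : good I r l := good_prefix I l r (invE e) u0 (hw ▸ w.2)
    refine ⟨⟨l, hg⟩, (succ_iff I r e w ⟨l, hg⟩).2 (Or.inr ⟨u0, hw⟩), hl⟩
  · have hok : okS I r w.1 e v := by
      rcases List.eq_nil_or_concat w.1 with hnil | ⟨l, ⟨e0, u0⟩, hw⟩
      · rw [hnil]; trivial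
      · rw [List.concat_eq_append] at hw
        rw [hw, okS_concat]
        rintro ⟨he, hvv⟩
        apply h
        refine ⟨l, u0, ?_, hvv.symm⟩
        rw [hw, he, invE_invE]
    have hg : good I r (w.1 ++ [(e, v)]) :=
      (good_snoc I w.1 r e v).2 ⟨w.2, hv, hok⟩
    refine ⟨⟨w.1 ++ [(e, v)], hg⟩, (succ_iff I r e w _).2 (Or.inl ⟨v, rfl⟩), ?_⟩
    exact lastOf_append_single I w.1 r e v

end Aux

/-- Graded unraveling preserves ALCQI concepts: for every concept `C` and every walk `w`
in the g-unraveling `I*` of `I` from `r`, `w ∈ C^{I*}` iff `f(w) ∈ C^I`, where `f` is the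
canonical map sending each walk to its last element. -/
theorem unravel_preserves_ALCQI {Cn Rn : Type} (I : Interp Cn Rn) (r : I.Dom)
    (C : ALCQI Cn Rn) (w : (unravel I r).Dom) :
    w ∈ qsem (unravel I r) C ↔ lastOf I r w.1 ∈ qsem I C := by
  induction C generalizing w with
  | top => simp [qsem]
  | bot => simp [qsem]
  | atom A => exact Iff.rfl
  | neg C ih => simp only [qsem, Set.mem_compl_iff, ih]
  | inter C D ihC ihD => simp only [qsem, Set.mem_inter_iff, ihC, ihD]
  | atLeast k R b C ih =>
    simp only [qsem, Set.mem_setOf_eq]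
    constructor
    · rintro ⟨f, hinj, hf⟩
      refine ⟨fun i => lastOf I r (f i).1, ?_, ?_⟩
      · intro i j hij
        exact hinj (succ_inj I r _ w (f i) (f j) (hf i).1 (hf j).1 hij)
      · intro i
        exact ⟨succ_last I r _ w (f i) (hf i).1, (ih (f i)).1 (hf i).2⟩
    · rintro ⟨g, hinj, hg⟩
      choose s hs hl using fun i => succ_surj I r _ w (g i) (hg i).1
      refine ⟨s, ?_, ?_⟩
      · intro i j hij
        apply hinj
        rw [← hl i, ← hl j, hij]
      · intro i
        exact ⟨hs i, (ih (s i)).2 (by rw [hl i]; exact (hg i).2)⟩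
end

section
/- The g-unraveling of an interpretation is tree-like: the graph on the domain of I* whose edges are the union of all roles and their inverses is a tree (connected and acyclic), rooted at the singleton walk (r). -/
section Aux

variable {Cn Rn : Type} (I : Interp Cn Rn) (r : I.Dom)

lemma good_concat : ∀ (u : I.Dom) (xs : List ((Rn ⊕ Rn) × I.Dom)) (a : (Rn ⊕ Rn) × I.Dom),
    good I u (xs ++ [a]) → good I u xs
  | _, [], _, _ => trivial
  | u, (e, v) :: xs, a, h => by
    obtain ⟨h1, h2, h3⟩ := h
    refine ⟨h1, ?_, good_concat v xs a h3⟩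
    cases xs with
    | nil => trivial
    | cons b xs' => exact h2

/-- The tree graph on the unraveling. -/
def unravelG : SimpleGraph ((unravel I r).Dom) :=
  SimpleGraph.fromRel (fun w w' : (unravel I r).Dom =>
    ∃ R, (w, w') ∈ (unravel I r).rInt R)

lemma adj_iff {w w' : (unravel I r).Dom} :
    (unravelG I r).Adj w w' ↔ (∃ a, w'.1 = w.1 ++ [a]) ∨ (∃ a, w.1 = w'.1 ++ [a]) := by
  constructor
  · rintro ⟨hne, (⟨R, (⟨u, h⟩ | ⟨u, h⟩)⟩ | ⟨R, (⟨u, h⟩ | ⟨u, h⟩)⟩)⟩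
    · exact Or.inl ⟨_, h⟩
    · exact Or.inr ⟨_, h⟩
    · exact Or.inr ⟨_, h⟩
    · exact Or.inl ⟨_, h⟩
  · have hne : ∀ (x y : (unravel I r).Dom) a, y.1 = x.1 ++ [a] → x ≠ y := by
      intro x y a h hxy
      rw [hxy] at h
      simpa using congrArg List.length h
    rintro (⟨⟨e, u⟩, h⟩ | ⟨⟨e, u⟩, h⟩)
    · refine ⟨hne _ _ _ h, ?_⟩
      cases e with
      | inl R => exact Or.inl ⟨R, Or.inl ⟨u, h⟩⟩
      | inr R => exact Or.inr ⟨R, Or.inr ⟨u, h⟩⟩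
    · refine ⟨(hne _ _ _ h).symm, ?_⟩
      cases e with
      | inl R => exact Or.inr ⟨R, Or.inl ⟨u, h⟩⟩
      | inr R => exact Or.inl ⟨R, Or.inr ⟨u, h⟩⟩

lemma adj_cases {w w' : (unravel I r).Dom} (h : (unravelG I r).Adj w w') :
    (w'.1 = w.1.dropLast ∧ w.1.length = w'.1.length + 1) ∨
    (w.1 = w'.1.dropLast ∧ w'.1.length = w.1.length + 1) := by
  rcases (adj_iff I r).1 h with ⟨a, ha⟩ | ⟨a, ha⟩
  · refine Or.inr ⟨?_, ?_⟩
    · rw [ha, List.dropLast_concat]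
    · rw [ha]; simp
  · refine Or.inl ⟨?_, ?_⟩
    · rw [ha, List.dropLast_concat]
    · rw [ha]; simp

/-- The root. -/
def unravelRoot : (unravel I r).Dom := ⟨[], trivial⟩

lemma reachable_root : ∀ (n : ℕ) (w : (unravel I r).Dom), w.1.length = n →
    (unravelG I r).Reachable (unravelRoot I r) w := by
  intro n
  induction n using Nat.strong_induction_on with
  | _ n ih =>
    intro w hw
    rcases List.eq_nil_or_concat w.1 with h | ⟨l, a, h⟩
    all_goals try rw [List.concat_eq_append] at h
    · have : w = unravelRoot I r := Subtype.ext h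
      rw [this]
    · have hg : good I r (l ++ [a]) := by rw [← h]; exact w.2
      set p : (unravel I r).Dom := ⟨l, good_concat I r l a hg⟩ with hp
      have hadj : (unravelG I r).Adj p w := (adj_iff I r).2 (Or.inl ⟨a, h⟩)
      have hlen : l.length < n := by
        subst hw; rw [h]; simp
      exact ((ih l.length hlen p rfl).trans hadj.reachable)

lemma exists_max_len {α : Type*} (f : α → ℕ) :
    ∀ (l : List α), l ≠ [] → ∃ m ∈ l, ∀ x ∈ l, f x ≤ f m := by
  intro l
  induction l with
  | nil => simp
  | cons a l ih =>
    intro _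
    rcases eq_or_ne l [] with rfl | hl
    · exact ⟨a, by simp, by simp⟩
    · obtain ⟨m, hm, hmax⟩ := ih hl
      rcases le_total (f a) (f m) with h | h
      · refine ⟨m, List.mem_cons_of_mem _ hm, ?_⟩
        intro x hx
        rcases List.mem_cons.1 hx with rfl | hx
        · exact h
        · exact hmax x hx
      · refine ⟨a, List.mem_cons_self, ?_⟩
        intro x hx
        rcases List.mem_cons.1 hx with rfl | hx
        · exact le_rfl
        · exact (hmax x hx).trans h

lemma unravel_acyclic : (unravelG I r).IsAcyclic := by
  classical
  intro v c hc
  -- pick a vertex of maximal length in the support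
  have hne : c.support.tail ≠ [] := by
    have h3 := hc.three_le_length
    cases c with
    | nil => simp at h3
    | cons h p => simp [SimpleGraph.Walk.support_cons]
  obtain ⟨m, hm, hmax⟩ := exists_max_len (fun x : (unravel I r).Dom => x.1.length)
    c.support.tail hne
  have hm' : m ∈ c.support := List.mem_of_mem_tail hm
  set c' := c.rotate m hm' with hc'def
  have hc' : c'.IsCycle := hc.rotate hm'
  have hmax' : ∀ x ∈ c'.support, x.1.length ≤ m.1.length := by
    intro x hx
    rcases (SimpleGraph.Walk.mem_support_iff c').1 hx with rfl | hx
    · exact le_rfl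
    · have : x ∈ c.support.tail :=
        (SimpleGraph.Walk.support_rotate c m hm').mem_iff.1 hx
      exact hmax x this
  clear_value c'
  clear hc hm hmax hm' hne hc'def
  cases c' with
  | nil => simpa using hc'.three_le_length
  | @cons _ u _ hadj p =>
    have h3 := hc'.three_le_length
    have hnd : p.support.Nodup := by
      have := hc'.support_nodup
      simpa [SimpleGraph.Walk.support_cons] using this
    -- u is the parent of m
    have hu : u.1 = m.1.dropLast ∧ m.1.length = u.1.length + 1 := by
      rcases adj_cases I r hadj with h | h
      · exact h
      · exfalso
        have : u ∈ (SimpleGraph.Walk.cons hadj p).support := by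
          simp [SimpleGraph.Walk.support_cons]
        have := hmax' u this
        omega
    have hmu : m ≠ u := by
      intro h
      rw [h] at hu
      omega
    obtain ⟨w, hadj2, q, hq⟩ := p.reverse.exists_eq_cons_of_ne hmu
    -- w is also the parent of m, hence w = u
    have hwsupp : w ∈ p.support := by
      have : w ∈ p.reverse.support := by
        rw [hq]; simp [SimpleGraph.Walk.support_cons]
      simpa using this
    have hw : w.1 = m.1.dropLast := by
      rcases adj_cases I r hadj2 with h | h
      · exact h.1
      · exfalso
        have : w ∈ (SimpleGraph.Walk.cons hadj p).support := by
          simp [SimpleGraph.Walk.support_cons, hwsupp]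
        have := hmax' w this
        omega
    have hwu : w = u := Subtype.ext (hw.trans hu.1.symm)
    subst hwu
    -- now q : Walk u u; derive a contradiction from Nodup
    cases q with
    | nil =>
      have : p.length = 1 := by
        have := congrArg SimpleGraph.Walk.length hq
        simpa using this
      simp [SimpleGraph.Walk.length_cons, this] at h3
    | @cons _ x _ hadj3 q' =>
      have hnd' : p.reverse.support.Nodup := by simpa using hnd
      rw [hq] at hnd'
      simp only [SimpleGraph.Walk.support_cons, List.nodup_cons] at hnd'
      exact hnd'.2.1 q'.end_mem_support

end Aux

/-- The g-unraveling is tree-like: the graph on the domain of `I*` whose edges are the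
union of all roles and their inverses is a tree (connected and acyclic), and it contains
the root, the singleton walk `(r)` (the empty walk). -/
theorem unravel_tree_like {Cn Rn : Type} (I : Interp Cn Rn) (r : I.Dom) :
    ∃ root : (unravel I r).Dom, root.1 = [] ∧
      (SimpleGraph.fromRel (fun w w' : (unravel I r).Dom =>
          ∃ R, (w, w') ∈ (unravel I r).rInt R)).Connected ∧
      (SimpleGraph.fromRel (fun w w' : (unravel I r).Dom =>
          ∃ R, (w, w') ∈ (unravel I r).rInt R)).IsAcyclic := by
  refine ⟨unravelRoot I r, rfl, ?_, unravel_acyclic I r⟩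
  haveI : Nonempty (unravel I r).Dom := ⟨unravelRoot I r⟩
  exact SimpleGraph.Connected.mk (fun u v => ((reachable_root I r _ u rfl).symm.trans
    (reachable_root I r _ v rfl)))
end
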